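/- For the function h(i) = exp(-(2^(B/(WT(1-iτ/T))) - 1)·(1 - iτ/T)·T·𝒩·/(e·σ)) / (1 + (2^(B/(WT(1-iτ/T))) - 1)·(1 - iτ/T)·c) with constants B, W, T, e, σ, 𝒩, c > 0 and 0 < τ < T, evaluated at i ∈ {0, 1}: h(1) < h(0). That is, the secondary user's probability of successful reception under primary interference is strictly smaller when it delays access to t = τ than when it accesses at t = 0. -/

import Mathlib

open Real

/-- The secondary user's probability of successful reception under primary
interference is strictly smaller when it delays access to `t = τ` (`i = 1`)
than when it accesses at `t = 0` (`i = 0`). -/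
theorem stmt11 (B W T e σ N c τ : ℝ) (hB : 0 < B) (hW : 0 < W) (hT : 0 < T)
    (he : 0 < e) (hσ : 0 < σ) (hN : 0 < N) (hc : 0 < c)
    (hτ : 0 < τ) (hτT : τ < T) :
    let h : ℝ → ℝ := fun i =>
      Real.exp (-(((2 : ℝ) ^ (B / (W * T * (1 - i * τ / T))) - 1) *
          (1 - i * τ / T) * T * N / (e * σ))) /
        (1 + ((2 : ℝ) ^ (B / (W * T * (1 - i * τ / T))) - 1) *
          (1 - i * τ / T) * c)
    h 1 < h 0 := by
  intro h
  have hWT : 0 < W * T := by positivity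
  set a : ℝ := B / (W * T) with ha
  have haPos : 0 < a := by positivity
  set x : ℝ := 1 - τ / T with hx
  have hx0 : 0 < x := by
    have : τ / T < 1 := (div_lt_one hT).2 hτT
    simp [hx]; linarith
  have hx1 : x < 1 := by
    have : 0 < τ / T := by positivity
    simp [hx]; linarith
  have hy : (1:ℝ) < (2:ℝ) ^ a :=
    Real.one_lt_rpow_iff_of_pos (by norm_num) |>.2 (Or.inl ⟨by norm_num, haPos⟩)
  -- key inequality : (2^(a/x) - 1) * x > 2^a - 1
  have key : (2:ℝ) ^ a - 1 < ((2:ℝ) ^ (a / x) - 1) * x := by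
    have ht : (1:ℝ) < 1 / x := by rw [lt_div_iff₀ hx0]; linarith
    have hs : (0:ℝ) < (2:ℝ) ^ a - 1 := by linarith
    have hb := one_add_mul_self_lt_rpow_one_add (s := (2:ℝ) ^ a - 1)
      (by linarith) (by linarith) ht
    have hrw : (1 + ((2:ℝ) ^ a - 1)) ^ (1 / x) = (2:ℝ) ^ (a / x) := by
      have : (1:ℝ) + ((2:ℝ) ^ a - 1) = (2:ℝ) ^ a := by ring
      rw [this, ← Real.rpow_mul (by norm_num : (0:ℝ) ≤ 2), mul_one_div]
    rw [hrw] at hb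
    -- hb : 1 + 1/x * (2^a - 1) < 2^(a/x)
    have := mul_lt_mul_of_pos_right hb hx0
    calc (2:ℝ) ^ a - 1 = (1 + 1 / x * ((2:ℝ) ^ a - 1)) * x - x := by
          field_simp
          ring
      _ < (2:ℝ) ^ (a / x) * x - x := by nlinarith
      _ = ((2:ℝ) ^ (a / x) - 1) * x := by ring
  have hF0 : (0:ℝ) < (2:ℝ) ^ a - 1 := by linarith
  have hK : (0:ℝ) < T * N / (e * σ) := by positivity
  -- rewrite the arguments
  have e1 : (1:ℝ) - 1 * τ / T = x := by simp [hx]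
  have e0 : (1:ℝ) - 0 * τ / T = 1 := by simp
  have arg1 : B / (W * T * (1 - 1 * τ / T)) = a / x := by
    rw [e1, ha, div_div]
  have arg0 : B / (W * T * (1 - 0 * τ / T)) = a := by
    rw [e0, mul_one]
  show Real.exp _ / _ < Real.exp _ / _
  rw [arg1, arg0, e1, e0]
  set F1 : ℝ := ((2:ℝ) ^ (a / x) - 1) * x with hF1
  have hF1pos : (0:ℝ) < F1 := lt_trans hF0 key
  have hnum : Real.exp (-(F1 * T * N / (e * σ))) <
      Real.exp (-(((2:ℝ) ^ a - 1) * 1 * T * N / (e * σ))) := by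
    apply Real.exp_lt_exp.2
    rw [mul_one]
    have : ((2:ℝ) ^ a - 1) * T * N / (e * σ) < F1 * T * N / (e * σ) := by
      gcongr
    linarith
  have hden : 1 + ((2:ℝ) ^ a - 1) * 1 * c ≤ 1 + F1 * c := by
    rw [mul_one]
    nlinarith
  have hdpos : (0:ℝ) < 1 + ((2:ℝ) ^ a - 1) * 1 * c := by
    rw [mul_one]; positivity
  exact div_lt_div₀ (by exact hnum) hden (le_of_lt (Real.exp_pos _)) hdpos
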